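/- Let C : Σ → {0,1}^n be a code with pairwise relative Hamming distance at least δ between distinct codewords. Let Y be a distribution over Σ that is ε-far in total variation distance from every distribution over Σ with support size at most m. Then the pushforward distribution C(Y) over {0,1}^n is at Hamming earth mover's distance at least 0.3·δ·ε from every distribution over {0,1}^n with support size at most m. -/

import Mathlib

open Finset
open scoped Classical

noncomputable section

/-- A probability distribution on a finite type, given as a mass function. -/
def IsDist {α : Type*} [Fintype α] (P : α → ℝ) : Prop :=
  (∀ x, 0 ≤ P x) ∧ ∑ x, P x = 1

/-- A coupling of two mass functions. -/
def IsCoupling {α : Type*} [Fintype α] (P Q : α → ℝ) (W : α → α → ℝ) : Prop :=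
  (∀ x y, 0 ≤ W x y) ∧ (∀ x, ∑ y, W x y = P x) ∧ (∀ y, ∑ x, W x y = Q y)

/-- Earth mover's distance with respect to a cost function `d`. -/
def emd {α : Type*} [Fintype α] (d : α → α → ℝ) (P Q : α → ℝ) : ℝ :=
  sInf {c : ℝ | ∃ W, IsCoupling P Q W ∧ c = ∑ x, ∑ y, W x y * d x y}

/-- Total variation distance. -/
def tv {α : Type*} [Fintype α] (P Q : α → ℝ) : ℝ :=
  (∑ x, |P x - Q x|) / 2

/-- Relative Hamming distance on `n`-bit strings. -/
def relHamming {n : ℕ} (x y : Fin n → Bool) : ℝ :=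
  (hammingDist x y : ℝ) / n

/-- Support size of a mass function. -/
def suppCard {α : Type*} [Fintype α] (P : α → ℝ) : ℕ :=
  (univ.filter fun x => P x ≠ 0).card

/-- Pushforward of a mass function along a map. -/
def push {α β : Type*} [Fintype α] (f : α → β) (P : α → ℝ) : β → ℝ :=
  fun y => ∑ x ∈ univ.filter (fun x => f x = y), P x

lemma relHamming_nonneg {n : ℕ} (x y : Fin n → Bool) : 0 ≤ relHamming x y :=
  div_nonneg (Nat.cast_nonneg _) (Nat.cast_nonneg _)

lemma relHamming_comm {n : ℕ} (x y : Fin n → Bool) : relHamming x y = relHamming y x := by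
  simp [relHamming, hammingDist_comm]

lemma relHamming_self {n : ℕ} (x : Fin n → Bool) : relHamming x x = 0 := by
  simp [relHamming]

lemma relHamming_triangle {n : ℕ} (x y z : Fin n → Bool) :
    relHamming x z ≤ relHamming x y + relHamming y z := by
  unfold relHamming
  rw [← add_div]
  rcases Nat.eq_zero_or_pos n with h | h
  · subst h; simp
  · apply div_le_div_of_nonneg_right ?_ (Nat.cast_nonneg n)
    exact_mod_cast hammingDist_triangle x y z

lemma push_isDist {α β : Type*} [Fintype α] [Fintype β] (f : α → β) (P : α → ℝ)
    (hP : IsDist P) : IsDist (push f P) := by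
  constructor
  · intro y; exact Finset.sum_nonneg fun x _ => hP.1 x
  · unfold push
    simp only [Finset.sum_filter]
    rw [Finset.sum_comm]
    simpa using hP.2

lemma suppCard_push_le {α β : Type*} [Fintype α] [Fintype β] (f : α → β) (P : α → ℝ) :
    suppCard (push f P) ≤ suppCard P := by
  unfold suppCard
  have h : (univ.filter fun y => push f P y ≠ 0) ⊆
      (univ.filter fun x => P x ≠ 0).image f := by
    intro y hy
    simp only [mem_filter, mem_univ, true_and] at hy
    obtain ⟨x, hx, hPx⟩ := Finset.exists_ne_zero_of_sum_ne_zero hy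
    simp only [mem_filter, mem_univ, true_and] at hx
    exact Finset.mem_image.mpr ⟨x, by simp [hPx], hx⟩
  calc (univ.filter fun y => push f P y ≠ 0).card
      ≤ ((univ.filter fun x => P x ≠ 0).image f).card := Finset.card_le_card h
    _ ≤ (univ.filter fun x => P x ≠ 0).card := Finset.card_image_le

/-- pushing a TV-far-from-small-support distribution through a code of relative
distance `δ` yields a distribution at Hamming EMD at least `0.3·δ·ε` from every distribution
with support size at most `m`. -/
theorem code_pushforward_far {n m : ℕ} {S : Type*} [Fintype S] (hn : 0 < n)
    (δ ε : ℝ) (hδ : 0 < δ)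
    (C : S → (Fin n → Bool))
    (hC : ∀ a b : S, a ≠ b → δ ≤ relHamming (C a) (C b))
    (Y : S → ℝ) (hY : IsDist Y)
    (hYfar : ∀ Q : S → ℝ, IsDist Q → suppCard Q ≤ m → ε < tv Y Q) :
    ∀ Z : (Fin n → Bool) → ℝ, IsDist Z → suppCard Z ≤ m →
      0.3 * δ * ε ≤ emd relHamming (push C Y) Z := by
  intro Z hZ hZm
  have hSne : Nonempty S := by
    rcases isEmpty_or_nonempty S with h | h
    · exfalso
      have h2 := hY.2
      rw [Finset.univ_eq_empty, Finset.sum_empty] at h2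
      norm_num at h2
    · exact h
  have hCinj : Function.Injective C := by
    intro a b hab
    by_contra hne
    have h1 := hC a b hne
    rw [hab, relHamming_self] at h1
    linarith
  -- nearest codeword map
  have hex : ∀ z : Fin n → Bool, ∃ a ∈ (univ : Finset S), ∀ b ∈ (univ : Finset S),
      relHamming (C a) z ≤ relHamming (C b) z :=
    fun z => Finset.exists_min_image univ (fun a => relHamming (C a) z) univ_nonempty
  choose ρ hρmem hρ using hex
  have hρ' : ∀ z b, relHamming (C (ρ z)) z ≤ relHamming (C b) z :=
    fun z b => hρ z b (mem_univ b)
  set Q : S → ℝ := push ρ Z with hQdef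
  have hQdist : IsDist Q := push_isDist ρ Z hZ
  have hQm : suppCard Q ≤ m := le_trans (suppCard_push_le ρ Z) hZm
  have hεtv : ε < tv Y Q := hYfar Q hQdist hQm
  have hPdist : IsDist (push C Y) := push_isDist C Y hY
  -- the half-distance fact
  have hhalf : ∀ (a : S) (z : Fin n → Bool), ρ z ≠ a → δ / 2 ≤ relHamming (C a) z := by
    intro a z hne
    have h1 := hρ' z a
    have h2 : δ ≤ relHamming (C a) (C (ρ z)) := by
      rw [relHamming_comm]; exact hC (ρ z) a hne
    have h3 := relHamming_triangle (C a) z (C (ρ z))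
    have h4 : relHamming z (C (ρ z)) = relHamming (C (ρ z)) z := relHamming_comm _ _
    linarith
  apply le_csInf
  · -- the set of coupling costs is nonempty: the product coupling
    refine ⟨∑ x, ∑ y, (push C Y x * Z y) * relHamming x y,
      fun x y => push C Y x * Z y, ⟨?_, ?_, ?_⟩, rfl⟩
    · intro x y; exact mul_nonneg (hPdist.1 x) (hZ.1 y)
    · intro x; rw [← Finset.mul_sum, hZ.2, mul_one]
    · intro y; rw [← Finset.sum_mul, hPdist.2, one_mul]
  · rintro c ⟨W, ⟨hWnn, hW1, hW2⟩, rfl⟩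
    -- W vanishes off codewords
    have hWzero : ∀ x, x ∉ (univ : Finset S).image C → ∀ z, W x z = 0 := by
      intro x hx z
      have h0 : push C Y x = 0 := by
        unfold push
        apply Finset.sum_eq_zero
        intro a ha
        exfalso
        simp only [mem_filter, mem_univ, true_and] at ha
        exact hx (Finset.mem_image.mpr ⟨a, mem_univ a, ha⟩)
      exact (Finset.sum_eq_zero_iff_of_nonneg (fun z' _ => hWnn x z')).mp
        (by rw [hW1 x, h0]) z (mem_univ z)
    -- the fiber sum identity
    have hfiber : ∀ z, ∑ a, W (C a) z = Z z := by
      intro z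
      rw [← hW2 z]
      rw [← Finset.sum_image (f := fun x => W x z)
        (fun a _ b _ h => hCinj h)]
      apply Finset.sum_subset (Finset.subset_univ _)
      intro x _ hx
      exact hWzero x hx z
    have hrow : ∀ a, ∑ z, W (C a) z = Y a := by
      intro a
      rw [hW1 (C a)]
      unfold push
      rw [Finset.sum_filter, Finset.sum_eq_single a]
      · simp
      · intro b _ hb
        rw [if_neg (fun h => hb (hCinj h))]
      · intro h; exact absurd (mem_univ a) h
    set D : S → ℝ := fun a => ∑ z ∈ univ.filter (fun z => ρ z = a), W (C a) z with hD
    set E : S → ℝ := fun a => ∑ z ∈ univ.filter (fun z => ¬ ρ z = a), W (C a) z with hE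
    have hDE : ∀ a, D a + E a = Y a := by
      intro a
      rw [hD, hE]
      dsimp only
      rw [Finset.sum_filter_add_sum_filter_not]
      exact hrow a
    have hDnn : ∀ a, 0 ≤ D a := fun a => Finset.sum_nonneg fun z _ => hWnn _ z
    have hEnn : ∀ a, 0 ≤ E a := fun a => Finset.sum_nonneg fun z _ => hWnn _ z
    have hDQ : ∀ a, D a ≤ Q a := by
      intro a
      rw [hQdef]
      unfold push
      apply Finset.sum_le_sum
      intro z hz
      rw [← hfiber z]
      exact Finset.single_le_sum (fun b _ => hWnn (C b) z) (mem_univ a)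
    have hDY : ∀ a, D a ≤ Y a := fun a => by
      have := hDE a; have := hEnn a; linarith
    -- tv bound
    have hsumE : ∑ a, E a = 1 - ∑ a, D a := by
      have : ∑ a, (D a + E a) = 1 := by
        rw [Finset.sum_congr rfl (fun a _ => hDE a), hY.2]
      rw [Finset.sum_add_distrib] at this
      linarith
    have htv : tv Y Q ≤ ∑ a, E a := by
      unfold tv
      rw [div_le_iff₀ (by norm_num : (0:ℝ) < 2)]
      have h1 : ∑ a, |Y a - Q a| ≤ ∑ a, ((Y a - D a) + (Q a - D a)) := by
        apply Finset.sum_le_sum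
        intro a _
        rw [abs_sub_le_iff]
        constructor
        · have := hDQ a; have := hDnn a; linarith
        · have := hDY a; have := hDnn a; linarith
      have h2 : ∑ a, ((Y a - D a) + (Q a - D a)) = (∑ a, E a) * 2 := by
        have hQs := hQdist.2
        have hYs := hY.2
        have : ∑ a, ((Y a - D a) + (Q a - D a))
            = ∑ a, Y a + ∑ a, Q a - 2 * ∑ a, D a := by
          rw [Finset.sum_add_distrib, Finset.sum_sub_distrib, Finset.sum_sub_distrib]
          ring
        rw [this, hQs, hYs, hsumE]
        ring
      linarith
    -- cost bound
    have hcost : (δ / 2) * ∑ a, E a ≤ ∑ x, ∑ y, W x y * relHamming x y := by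
      have hstep1 : ∑ x, ∑ y, W x y * relHamming x y
          = ∑ a, ∑ y, W (C a) y * relHamming (C a) y := by
        rw [← Finset.sum_image (f := fun x => ∑ y, W x y * relHamming x y)
          (fun a _ b _ h => hCinj h)]
        symm
        apply Finset.sum_subset (Finset.subset_univ _)
        intro x _ hx
        apply Finset.sum_eq_zero
        intro y _
        rw [hWzero x hx y, zero_mul]
      rw [hstep1, Finset.mul_sum]
      apply Finset.sum_le_sum
      intro a _
      calc δ / 2 * E a = ∑ z ∈ univ.filter (fun z => ¬ ρ z = a), W (C a) z * (δ / 2) := by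
            rw [hE]; dsimp only; rw [← Finset.sum_mul]; ring
        _ ≤ ∑ z ∈ univ.filter (fun z => ¬ ρ z = a), W (C a) z * relHamming (C a) z := by
            apply Finset.sum_le_sum
            intro z hz
            simp only [mem_filter, mem_univ, true_and] at hz
            exact mul_le_mul_of_nonneg_left (hhalf a z hz) (hWnn _ z)
        _ ≤ ∑ z, W (C a) z * relHamming (C a) z := by
            apply Finset.sum_le_sum_of_subset_of_nonneg (Finset.filter_subset _ _)
            intro z _ _
            exact mul_nonneg (hWnn _ z) (relHamming_nonneg _ _)
    have hcnn : 0 ≤ ∑ x, ∑ y, W x y * relHamming x y :=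
      Finset.sum_nonneg fun x _ => Finset.sum_nonneg fun y _ =>
        mul_nonneg (hWnn x y) (relHamming_nonneg x y)
    rcases le_or_gt ε 0 with hε | hε
    · nlinarith
    · have h5 : ε < ∑ a, E a := lt_of_lt_of_le hεtv htv
      nlinarith
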